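/- Let m ≥ 3 and let q ∈ ℂ be a primitive m-th root of unity. For every λ ∈ ℂ with λ ≠ 0 and every α, β ∈ ℂ, the triple M(λ, α, β) of m×m matrices satisfies the defining relations of U_q(sl(2)): K·E·K⁻¹ = q·E, K·F·K⁻¹ = q⁻¹·F, and E·F − F·E = (K² − K⁻²)/(q − q⁻¹). -/

import Mathlib

open Matrix

noncomputable section

/-- The q-integer `(p)_q = (q^p - q^{-p})/(q - q⁻¹)`. -/
def qint (q : ℂ) (p : ℤ) : ℂ := (q ^ p - q ^ (-p)) / (q - q⁻¹)

/-- A representation of `U_q(sl(2))` of dimension `N`: a triple `(K, E, F)` of `N×N`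
complex matrices with `K` invertible satisfying the defining relations. -/
def IsRep (q : ℂ) {N : ℕ} (K E F : Matrix (Fin N) (Fin N) ℂ) : Prop :=
  IsUnit K ∧
  K * E * K⁻¹ = q • E ∧
  K * F * K⁻¹ = q⁻¹ • F ∧
  E * F - F * E = (q - q⁻¹)⁻¹ • (K ^ 2 - K⁻¹ ^ 2)

/-- A subspace invariant under the three matrices `K`, `E`, `F`. -/
def InvariantSub {N : ℕ} (K E F : Matrix (Fin N) (Fin N) ℂ)
    (W : Submodule ℂ (Fin N → ℂ)) : Prop :=
  (∀ v ∈ W, K.mulVec v ∈ W) ∧ (∀ v ∈ W, E.mulVec v ∈ W) ∧ (∀ v ∈ W, F.mulVec v ∈ W)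

/-- An irreducible representation of `U_q(sl(2))` of dimension `N`. -/
def IsIrrep (q : ℂ) {N : ℕ} (K E F : Matrix (Fin N) (Fin N) ℂ) : Prop :=
  IsRep q K E F ∧ 1 ≤ N ∧
  ∀ W : Submodule ℂ (Fin N → ℂ), InvariantSub K E F W → W = ⊥ ∨ W = ⊤

/-- The coefficient `c_p = (p)_q(λ² q^{1−p} − λ⁻² q^{p−1})/(q − q⁻¹) + αβ`. -/
def cCoeff (q lam α β : ℂ) (p : ℕ) : ℂ :=
  qint q p *
    ((lam ^ 2 * q ^ (1 - (p : ℤ)) - (lam⁻¹) ^ 2 * q ^ ((p : ℤ) - 1)) / (q - q⁻¹)) +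
  α * β

/-- The `K` matrix of the module `M(λ, α, β)`: `K·v_p = λ q^{-p} v_p`. -/
def MK (q lam : ℂ) (m : ℕ) : Matrix (Fin m) (Fin m) ℂ :=
  Matrix.diagonal fun p => lam * q ^ (-(p : ℤ))

/-- The `F` matrix of `M(λ, α, β)`: `F·v_p = v_{p+1}` for `p ≤ m−2`, `F·v_{m−1} = α·v_0`. -/
def MF (α : ℂ) (m : ℕ) : Matrix (Fin m) (Fin m) ℂ :=
  Matrix.of fun i j =>
    if (i : ℕ) = (j : ℕ) + 1 then 1
    else if (j : ℕ) = m - 1 ∧ (i : ℕ) = 0 then α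
    else 0

/-- The `E` matrix of `M(λ, α, β)`: `E·v_0 = β·v_{m−1}` and `E·v_p = c_p·v_{p−1}`
for `1 ≤ p ≤ m−1`. -/
def ME (q lam α β : ℂ) (m : ℕ) : Matrix (Fin m) (Fin m) ℂ :=
  Matrix.of fun i j =>
    if (j : ℕ) = (i : ℕ) + 1 then cCoeff q lam α β (j : ℕ)
    else if (j : ℕ) = 0 ∧ (i : ℕ) = m - 1 then β
    else 0

/-- For `q` a primitive `m`-th root of unity (`m ≥ 3`), `λ ≠ 0` and any `α, β`, the triple
`M(λ, α, β)` satisfies the defining relations of `U_q(sl(2))`. -/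

lemma sum_single {m : ℕ} (c : ℕ) (hc : c < m) (g : Fin m → ℂ) :
    (∑ k : Fin m, if (k : ℕ) = c then g k else 0) = g ⟨c, hc⟩ := by
  rw [Finset.sum_eq_single (⟨c, hc⟩ : Fin m)]
  · simp
  · intro k _ hk
    exact if_neg fun h => hk (Fin.ext h)
  · intro h; exact absurd (Finset.mem_univ _) h

lemma aux1 (a b : ℂ) (ha : a ≠ 0) : a⁻¹ * b * a ^ 2 = b * a := by field_simp

lemma cC (q lam α β : ℂ) (hd : q - q⁻¹ ≠ 0) (p : ℕ) :
    cCoeff q lam α β p * (q - q⁻¹)^2 =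
      (q ^ (p:ℤ) - q ^ (-(p:ℤ))) * (lam ^ 2 * q ^ (1 - (p : ℤ)) - (lam⁻¹) ^ 2 * q ^ ((p : ℤ) - 1))
        + α * β * (q - q⁻¹)^2 := by
  unfold cCoeff qint
  rw [add_mul, div_mul_div_comm, show ((q:ℂ) - q⁻¹)^2 = (q-q⁻¹)*(q-q⁻¹) from sq _,
    div_mul_cancel₀ _ (mul_ne_zero hd hd)]

lemma key (q lam α β : ℂ) (hq0 : q ≠ 0) (hd : q - q⁻¹ ≠ 0) (hlam : lam ≠ 0) (p : ℕ) :
    cCoeff q lam α β (p+1) - cCoeff q lam α β p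
      = (q - q⁻¹)⁻¹ * ((lam * q ^ (-(p:ℤ)))^2 - ((lam * q ^ (-(p:ℤ)))⁻¹)^2) := by
  apply mul_right_cancel₀ (pow_ne_zero 2 hd)
  rw [sub_mul, cC _ _ _ _ hd, cC _ _ _ _ hd, aux1 _ _ hd]
  push_cast
  simp only [zpow_sub₀ hq0, zpow_add₀ hq0, _root_.zpow_neg, zpow_one, mul_inv, inv_inv, inv_pow]
  set x := q ^ (p:ℤ) with hxdef
  have hx : x ≠ 0 := zpow_ne_zero _ hq0
  have h1 : x * x⁻¹ = 1 := mul_inv_cancel₀ hx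
  have h2 : q * q⁻¹ = 1 := mul_inv_cancel₀ hq0
  linear_combination (q^2*lam^2*q⁻¹ + q*q⁻¹^2*lam⁻¹^2 - q*lam^2 - q⁻¹*lam⁻¹^2) * h1 +
    (-(x^2*q*lam⁻¹^2) - lam^2*x⁻¹^2*q⁻¹ + q*lam^2 + q⁻¹*lam⁻¹^2) * h2

lemma c0 (q lam α β : ℂ) : cCoeff q lam α β 0 = α * β := by
  simp [cCoeff, qint]

lemma cm (q lam α β : ℂ) (m : ℕ) (hone : q ^ (m:ℤ) = 1) : cCoeff q lam α β m = α * β := by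
  simp [cCoeff, qint, hone, _root_.zpow_neg]

lemma factg (q lam : ℂ) (hq0 : q ≠ 0) (hlam : lam ≠ 0) (a b : ℤ) :
    lam * q ^ (-a) * (lam * q ^ (-b))⁻¹ = q ^ (b - a) := by
  rw [mul_inv, _root_.zpow_neg, _root_.zpow_neg, inv_inv, zpow_sub₀ hq0]
  have ha : q ^ a ≠ 0 := zpow_ne_zero _ hq0
  have hb : q ^ b ≠ 0 := zpow_ne_zero _ hq0
  field_simp


theorem stmt13 (m : ℕ) (hm : 3 ≤ m) (q : ℂ) (hq : IsPrimitiveRoot q m)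
    (lam α β : ℂ) (hlam : lam ≠ 0) :
    IsRep q (MK q lam m) (ME q lam α β m) (MF α m) := by
  have hqm : q ^ m = 1 := hq.pow_eq_one
  have hq0 : q ≠ 0 := by rintro rfl; simp [zero_pow (by omega : m ≠ 0)] at hqm
  have hone : q ^ (m : ℤ) = 1 := by rw [zpow_natCast]; exact hqm
  have hd : q - q⁻¹ ≠ 0 := by
    intro h
    have h2 : q ^ 2 = 1 := by
      rw [sq]; nth_rewrite 2 [sub_eq_zero.mp h]; exact mul_inv_cancel₀ hq0
    have hdvd := (hq.pow_eq_one_iff_dvd 2).mp h2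
    have := Nat.le_of_dvd (by norm_num) hdvd
    omega
  have hdm : ∀ p : Fin m, lam * q ^ (-(p : ℤ)) ≠ 0 :=
    fun p => mul_ne_zero hlam (zpow_ne_zero _ hq0)
  have hKmul : MK q lam m * Matrix.diagonal (fun p : Fin m => (lam * q ^ (-(p : ℤ)))⁻¹) = 1 := by
    rw [MK, Matrix.diagonal_mul_diagonal]
    rw [show (fun p : Fin m => lam * q ^ (-(p:ℤ)) * (lam * q ^ (-(p:ℤ)))⁻¹) = fun _ => (1:ℂ)
      from funext fun p => mul_inv_cancel₀ (hdm p), Matrix.diagonal_one]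
  have hKinv : (MK q lam m)⁻¹ = Matrix.diagonal (fun p : Fin m => (lam * q ^ (-(p : ℤ)))⁻¹) :=
    Matrix.inv_eq_right_inv hKmul
  -- relation 1
  have rel1 : MK q lam m * ME q lam α β m * (MK q lam m)⁻¹ = q • ME q lam α β m := by
    rw [hKinv]
    ext i j
    rw [MK, Matrix.mul_diagonal, Matrix.diagonal_mul, Matrix.smul_apply, smul_eq_mul]
    simp only [ME, Matrix.of_apply]
    split_ifs with h h2
    · rw [show lam * q ^ (-(i:ℤ)) * cCoeff q lam α β (j:ℕ) * (lam * q ^ (-(j:ℤ)))⁻¹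
        = (lam * q ^ (-(i:ℤ)) * (lam * q ^ (-(j:ℤ)))⁻¹) * cCoeff q lam α β (j:ℕ) from by ring,
        factg q lam hq0 hlam, show ((j:ℤ) - (i:ℤ)) = 1 from by omega, zpow_one]
    · obtain ⟨hj, hi⟩ := h2
      rw [show lam * q ^ (-(i:ℤ)) * β * (lam * q ^ (-(j:ℤ)))⁻¹
        = (lam * q ^ (-(i:ℤ)) * (lam * q ^ (-(j:ℤ)))⁻¹) * β from by ring,
        factg q lam hq0 hlam, show ((j:ℤ) - (i:ℤ)) = 1 + -(m:ℤ) from by omega,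
        zpow_add₀ hq0, zpow_one, _root_.zpow_neg, hone, inv_one, mul_one]
    · simp
  -- relation 2
  have rel2 : MK q lam m * MF α m * (MK q lam m)⁻¹ = q⁻¹ • MF α m := by
    rw [hKinv]
    ext i j
    rw [MK, Matrix.mul_diagonal, Matrix.diagonal_mul, Matrix.smul_apply, smul_eq_mul]
    simp only [MF, Matrix.of_apply]
    split_ifs with h h2
    · rw [mul_one, show lam * q ^ (-(i:ℤ)) * (lam * q ^ (-(j:ℤ)))⁻¹
        = lam * q ^ (-(i:ℤ)) * (1:ℂ) * (lam * q ^ (-(j:ℤ)))⁻¹ from by ring]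
      rw [show lam * q ^ (-(i:ℤ)) * (1:ℂ) * (lam * q ^ (-(j:ℤ)))⁻¹
        = (lam * q ^ (-(i:ℤ)) * (lam * q ^ (-(j:ℤ)))⁻¹) from by ring,
        factg q lam hq0 hlam, show ((j:ℤ) - (i:ℤ)) = -1 from by omega, _root_.zpow_neg_one, mul_one]
    · obtain ⟨hj, hi⟩ := h2
      rw [show lam * q ^ (-(i:ℤ)) * α * (lam * q ^ (-(j:ℤ)))⁻¹
        = (lam * q ^ (-(i:ℤ)) * (lam * q ^ (-(j:ℤ)))⁻¹) * α from by ring,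
        factg q lam hq0 hlam, show ((j:ℤ) - (i:ℤ)) = -1 + (m:ℤ) from by omega,
        zpow_add₀ hq0, _root_.zpow_neg_one, hone, mul_one]
    · simp
  -- EF entries
  have hEF : ∀ i j : Fin m, (ME q lam α β m * MF α m) i j
      = if (i:ℕ) = (j:ℕ) then cCoeff q lam α β ((i:ℕ)+1) else 0 := by
    intro i j
    rw [Matrix.mul_apply]
    by_cases hi : (i:ℕ) = m - 1
    · have h0 : 0 < m := by omega
      have step : ∀ k : Fin m, ME q lam α β m i k * MF α m k j
          = if (k:ℕ) = 0 then β * MF α m k j else 0 := by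
        intro k
        have hk := k.isLt
        simp only [ME, Matrix.of_apply]
        rw [if_neg (by omega)]
        by_cases h : (k:ℕ) = 0
        · rw [if_pos ⟨h, hi⟩, if_pos h]
        · rw [if_neg (by tauto), if_neg h, zero_mul]
      rw [Finset.sum_congr rfl fun k _ => step k, sum_single 0 h0]
      have hv : ((⟨0, h0⟩ : Fin m) : ℕ) = 0 := rfl
      simp only [MF, Matrix.of_apply, hv]
      have hj2 := j.isLt
      by_cases hj : (j:ℕ) = m - 1
      · rw [if_neg (by omega), if_pos ⟨hj, trivial⟩, if_pos (by omega),
          show (i:ℕ)+1 = m from by omega, cm q lam α β m hone]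
        ring
      · rw [if_neg (by omega), if_neg (by tauto), mul_zero, if_neg (by omega)]
    · have hi2 := i.isLt
      have h1 : (i:ℕ) + 1 < m := by omega
      have step : ∀ k : Fin m, ME q lam α β m i k * MF α m k j
          = if (k:ℕ) = (i:ℕ)+1 then cCoeff q lam α β ((i:ℕ)+1) * MF α m k j else 0 := by
        intro k
        have hk := k.isLt
        simp only [ME, Matrix.of_apply]
        by_cases h : (k:ℕ) = (i:ℕ)+1
        · rw [if_pos h, if_pos h, h]
        · rw [if_neg h, if_neg (by omega), zero_mul, if_neg h]
      rw [Finset.sum_congr rfl fun k _ => step k, sum_single _ h1]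
      have hv : ((⟨(i:ℕ)+1, h1⟩ : Fin m) : ℕ) = (i:ℕ)+1 := rfl
      simp only [MF, Matrix.of_apply, hv]
      by_cases hij : (i:ℕ) = (j:ℕ)
      · rw [if_pos (by omega), mul_one, if_pos hij]
      · rw [if_neg (by omega), if_neg (by omega), mul_zero, if_neg hij]
  -- FE entries
  have hFE : ∀ i j : Fin m, (MF α m * ME q lam α β m) i j
      = if (i:ℕ) = (j:ℕ) then cCoeff q lam α β (i:ℕ) else 0 := by
    intro i j
    rw [Matrix.mul_apply]
    by_cases hi : (i:ℕ) = 0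
    · have h1 : m - 1 < m := by omega
      have step : ∀ k : Fin m, MF α m i k * ME q lam α β m k j
          = if (k:ℕ) = m - 1 then α * ME q lam α β m k j else 0 := by
        intro k
        have hk := k.isLt
        simp only [MF, Matrix.of_apply]
        rw [if_neg (by omega)]
        by_cases h : (k:ℕ) = m - 1
        · rw [if_pos ⟨h, hi⟩, if_pos h]
        · rw [if_neg (by tauto), if_neg h, zero_mul]
      rw [Finset.sum_congr rfl fun k _ => step k, sum_single _ h1]
      have hv : ((⟨m - 1, h1⟩ : Fin m) : ℕ) = m - 1 := rfl
      simp only [ME, Matrix.of_apply, hv]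
      have hj2 := j.isLt
      by_cases hj : (j:ℕ) = 0
      · rw [if_neg (by omega), if_pos ⟨hj, trivial⟩, if_pos (by omega), hi,
          c0 q lam α β]
      · rw [if_neg (by omega), if_neg (by tauto), mul_zero, if_neg (by omega)]
    · have hi2 := i.isLt
      have h1 : (i:ℕ) - 1 < m := by omega
      have step : ∀ k : Fin m, MF α m i k * ME q lam α β m k j
          = if (k:ℕ) = (i:ℕ) - 1 then ME q lam α β m k j else 0 := by
        intro k
        have hk := k.isLt
        simp only [MF, Matrix.of_apply]
        by_cases h : (k:ℕ) = (i:ℕ) - 1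
        · rw [if_pos (by omega), if_pos h, one_mul]
        · rw [if_neg (by omega), if_neg (by tauto), zero_mul, if_neg h]
      rw [Finset.sum_congr rfl fun k _ => step k, sum_single _ h1]
      have hv : ((⟨(i:ℕ) - 1, h1⟩ : Fin m) : ℕ) = (i:ℕ) - 1 := rfl
      simp only [ME, Matrix.of_apply, hv]
      have hj2 := j.isLt
      by_cases hij : (i:ℕ) = (j:ℕ)
      · rw [if_pos (by omega), if_pos hij, ← hij]
      · rw [if_neg (by omega), if_neg (by omega), if_neg hij]
  -- relation 3
  have rel3 : ME q lam α β m * MF α m - MF α m * ME q lam α β m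
      = (q - q⁻¹)⁻¹ • ((MK q lam m) ^ 2 - ((MK q lam m)⁻¹) ^ 2) := by
    rw [hKinv]
    ext i j
    rw [Matrix.sub_apply, hEF i j, hFE i j, Matrix.smul_apply, Matrix.sub_apply, MK,
      Matrix.diagonal_pow, Matrix.diagonal_pow, Matrix.diagonal_apply, Matrix.diagonal_apply,
      smul_eq_mul]
    by_cases hij : i = j
    · rw [if_pos (show (i:ℕ) = (j:ℕ) from by rw [hij]), if_pos (show (i:ℕ) = (j:ℕ) from by rw [hij]),
        if_pos hij, if_pos hij, Pi.pow_apply, Pi.pow_apply]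
      exact key q lam α β hq0 hd hlam (i:ℕ)
    · rw [if_neg (fun h => hij (Fin.ext h)), if_neg (fun h => hij (Fin.ext h)), if_neg hij, if_neg hij]
      simp
  exact ⟨(Matrix.isUnit_iff_isUnit_det _).2 (Matrix.isUnit_det_of_right_inverse hKmul), rel1, rel2, rel3⟩
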